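/- Let Z₁ and Z₂ be 𝒢-complexes over 𝔽 = ℤ/2ℤ with fundamental classes f₁ of degree t₁ and f₂ of degree t₂, and let D₁, D₂ ≥ 0 be integers. Suppose that for ℓ = 1, 2 there are elements x^ℓ_i ∈ (Z_ℓ)_i for i = t_ℓ+1, t_ℓ+3, …, t_ℓ+2D_ℓ−1 satisfying ∂x^ℓ_{t_ℓ+1} = f_ℓ and ∂x^ℓ_i = s(1+j²)x^ℓ_{i−2} for t_ℓ+3 ≤ i ≤ t_ℓ+2D_ℓ−1. Then, setting t = t₁+t₂, there exist elements χ_i ∈ (Z₁ ⊗_𝔽 Z₂)_i for i = t+1, t+3, …, t+2(D₁+D₂)−1 satisfying ∂χ_{t+1} = f₁ ⊗ f₂ and ∂χ_i = s(1+j²)χ_{i−2} for t+3 ≤ i ≤ t+2(D₁+D₂)−1. -/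
import Mathlib



open scoped TensorProduct

/-- A `𝒢`-complex over `𝔽 = ℤ/2ℤ`: a `ℤ`-graded `𝔽`-vector space `M = ⊕ᵢ Mᵢ` with
`𝔽`-linear maps `∂` (degree `-1`), `j` (degree `0`), `s` (degree `+1`) satisfying
`∂² = 0`, `j⁴ = id`, `s² = 0`, `s∘j = j³∘s`, `∂∘j = j∘∂` and `∂(sz) = s(∂z) + (1+j²)z`. -/
structure GComplexOn (M : Type*) [AddCommGroup M] [Module (ZMod 2) M] where
  grading : ℤ → Submodule (ZMod 2) M
  isInternal : DirectSum.IsInternal grading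
  d : M →ₗ[ZMod 2] M
  j : M →ₗ[ZMod 2] M
  s : M →ₗ[ZMod 2] M
  d_mem : ∀ (i : ℤ), ∀ x ∈ grading i, d x ∈ grading (i - 1)
  j_mem : ∀ (i : ℤ), ∀ x ∈ grading i, j x ∈ grading i
  s_mem : ∀ (i : ℤ), ∀ x ∈ grading i, s x ∈ grading (i + 1)
  d_sq : ∀ x, d (d x) = 0
  j_four : ∀ x, j (j (j (j x))) = x
  s_sq : ∀ x, s (s x) = 0
  s_j : ∀ x, s (j x) = j (j (j (s x)))
  d_j : ∀ x, d (j x) = j (d x)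
  d_s : ∀ x, d (s x) = s (d x) + x + j (j x)

/-- A fundamental class of degree `t`: a nonzero cycle in degree `t`, fixed by `j` and
killed by `s`. -/
def IsFundClass {M : Type*} [AddCommGroup M] [Module (ZMod 2) M]
    (Z : GComplexOn M) (t : ℤ) (f : M) : Prop :=
  f ≠ 0 ∧ f ∈ Z.grading t ∧ Z.d f = 0 ∧ Z.j f = f ∧ Z.s f = 0

/-- The `n`-th graded piece `(Z₁ ⊗ Z₂)ₙ = ⊕_{i+k=n} (Z₁)ᵢ ⊗ (Z₂)_k` of the tensor
product of graded modules. -/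
noncomputable def tensorGrading {M₁ M₂ : Type*} [AddCommGroup M₁] [Module (ZMod 2) M₁]
    [AddCommGroup M₂] [Module (ZMod 2) M₂]
    (g₁ : ℤ → Submodule (ZMod 2) M₁) (g₂ : ℤ → Submodule (ZMod 2) M₂) (n : ℤ) :
    Submodule (ZMod 2) (M₁ ⊗[ZMod 2] M₂) :=
  ⨆ i : ℤ, Submodule.span (ZMod 2)
    {z | ∃ a ∈ g₁ i, ∃ b ∈ g₂ (n - i), z = a ⊗ₜ[ZMod 2] b}

/-- The differential `∂(a⊗b) = ∂a⊗b + a⊗∂b` on the tensor product. -/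
noncomputable def tensorD {M₁ M₂ : Type*} [AddCommGroup M₁] [Module (ZMod 2) M₁]
    [AddCommGroup M₂] [Module (ZMod 2) M₂]
    (d₁ : M₁ →ₗ[ZMod 2] M₁) (d₂ : M₂ →ₗ[ZMod 2] M₂) :
    M₁ ⊗[ZMod 2] M₂ →ₗ[ZMod 2] M₁ ⊗[ZMod 2] M₂ :=
  TensorProduct.map d₁ LinearMap.id + TensorProduct.map LinearMap.id d₂

/-- The map `j(a⊗b) = ja ⊗ jb` on the tensor product. -/
noncomputable def tensorJ {M₁ M₂ : Type*} [AddCommGroup M₁] [Module (ZMod 2) M₁]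
    [AddCommGroup M₂] [Module (ZMod 2) M₂]
    (j₁ : M₁ →ₗ[ZMod 2] M₁) (j₂ : M₂ →ₗ[ZMod 2] M₂) :
    M₁ ⊗[ZMod 2] M₂ →ₗ[ZMod 2] M₁ ⊗[ZMod 2] M₂ :=
  TensorProduct.map j₁ j₂

/-- The map `s(a⊗b) = sa ⊗ b + j²a ⊗ sb` on the tensor product. -/
noncomputable def tensorS {M₁ M₂ : Type*} [AddCommGroup M₁] [Module (ZMod 2) M₁]
    [AddCommGroup M₂] [Module (ZMod 2) M₂]
    (j₁ s₁ : M₁ →ₗ[ZMod 2] M₁) (s₂ : M₂ →ₗ[ZMod 2] M₂) :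
    M₁ ⊗[ZMod 2] M₂ →ₗ[ZMod 2] M₁ ⊗[ZMod 2] M₂ :=
  TensorProduct.map s₁ LinearMap.id + TensorProduct.map (j₁ ∘ₗ j₁) s₂

/-- A tower of the kind computing the invariant `d` of a suspensionlike complex
(equation (3.7) of the paper): elements `x i ∈ g i` for `i = t+1, t+3, …, t+2D-1` with
`∂ x_{t+1} = f` and `∂ x_i = s(1+j²) x_{i-2}` for `t+3 ≤ i ≤ t+2D-1`. -/
def TowerD {M : Type*} [AddCommGroup M] [Module (ZMod 2) M]
    (g : ℤ → Submodule (ZMod 2) M) (d j s : M →ₗ[ZMod 2] M)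
    (f : M) (t : ℤ) (D : ℕ) (x : ℤ → M) : Prop :=
  (∀ i : ℤ, t + 1 ≤ i → i ≤ t + 2*(D : ℤ) - 1 → i % 2 = (t + 1) % 2 → x i ∈ g i) ∧
  (1 ≤ D → d (x (t + 1)) = f) ∧
  (∀ i : ℤ, t + 3 ≤ i → i ≤ t + 2*(D : ℤ) - 1 → i % 2 = (t + 1) % 2 →
    d (x i) = s (x (i - 2)) + s (j (j (x (i - 2)))))


section Helpers

variable {M₁ M₂ : Type*} [AddCommGroup M₁] [Module (ZMod 2) M₁]
  [AddCommGroup M₂] [Module (ZMod 2) M₂]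

lemma zmod2_add_self {M : Type*} [AddCommGroup M] [Module (ZMod 2) M] (m : M) :
    m + m = 0 := by
  have h : ((2 : ZMod 2)) • m = m + m := two_smul (ZMod 2) m
  have h2 : (2 : ZMod 2) = 0 := by decide
  rw [h2, zero_smul] at h
  exact h.symm

lemma tmul_mem_tensorGrading (g₁ : ℤ → Submodule (ZMod 2) M₁)
    (g₂ : ℤ → Submodule (ZMod 2) M₂) {a : M₁} {b : M₂} {i k n : ℤ}
    (ha : a ∈ g₁ i) (hb : b ∈ g₂ k) (h : n = i + k) :
    a ⊗ₜ[ZMod 2] b ∈ tensorGrading g₁ g₂ n := by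
  refine le_iSup (fun i => Submodule.span (ZMod 2)
    {z | ∃ a ∈ g₁ i, ∃ b ∈ g₂ (n - i), z = a ⊗ₜ[ZMod 2] b}) i ?_
  refine Submodule.subset_span ⟨a, ha, b, ?_, rfl⟩
  have : n - i = k := by omega
  rw [this]; exact hb

lemma tensorD_tmul (d₁ : M₁ →ₗ[ZMod 2] M₁) (d₂ : M₂ →ₗ[ZMod 2] M₂) (a : M₁) (b : M₂) :
    tensorD d₁ d₂ (a ⊗ₜ[ZMod 2] b) = d₁ a ⊗ₜ[ZMod 2] b + a ⊗ₜ[ZMod 2] d₂ b := by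
  simp [tensorD]

lemma rhs_tmul_fix (j₁ s₁ : M₁ →ₗ[ZMod 2] M₁) (j₂ s₂ : M₂ →ₗ[ZMod 2] M₂)
    (a : M₁) {f₂ : M₂} (hj : j₂ f₂ = f₂) (hs : s₂ f₂ = 0) :
    tensorS j₁ s₁ s₂ (a ⊗ₜ[ZMod 2] f₂) +
      tensorS j₁ s₁ s₂ (tensorJ j₁ j₂ (tensorJ j₁ j₂ (a ⊗ₜ[ZMod 2] f₂))) =
    (s₁ a + s₁ (j₁ (j₁ a))) ⊗ₜ[ZMod 2] f₂ := by
  simp [tensorS, tensorJ, hj, hs, TensorProduct.add_tmul]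

lemma rhs_z_tmul (j₁ s₁ : M₁ →ₗ[ZMod 2] M₁) (j₂ s₂ : M₂ →ₗ[ZMod 2] M₂)
    {z : M₁} (b : M₂) (hs : s₁ z = 0) (hj : j₁ (j₁ z) = z) :
    tensorS j₁ s₁ s₂ (z ⊗ₜ[ZMod 2] b) +
      tensorS j₁ s₁ s₂ (tensorJ j₁ j₂ (tensorJ j₁ j₂ (z ⊗ₜ[ZMod 2] b))) =
    z ⊗ₜ[ZMod 2] (s₂ b + s₂ (j₂ (j₂ b))) := by
  simp [tensorS, tensorJ, hs, hj, TensorProduct.tmul_add]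

lemma GComplexOn.s_jj {M : Type*} [AddCommGroup M] [Module (ZMod 2) M]
    (Z : GComplexOn M) (u : M) :
    Z.s (Z.j (Z.j u)) = Z.j (Z.j (Z.s u)) := by
  rw [Z.s_j (Z.j u), Z.s_j u, Z.j_four (Z.s u)]

end Helpers

/-- given `d`-type towers of heights `D₁, D₂` over fundamental classes
`f₁, f₂` in 𝒢-complexes `Z₁, Z₂`, there is a `d`-type tower of height `D₁+D₂` over
`f₁ ⊗ f₂` in `Z₁ ⊗_𝔽 Z₂`. -/
theorem stmt_14 {M₁ M₂ : Type*} [AddCommGroup M₁] [Module (ZMod 2) M₁]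
    [AddCommGroup M₂] [Module (ZMod 2) M₂]
    (Z₁ : GComplexOn M₁) (Z₂ : GComplexOn M₂) (t₁ t₂ : ℤ) (D₁ D₂ : ℕ)
    (f₁ : M₁) (f₂ : M₂) (hf₁ : IsFundClass Z₁ t₁ f₁) (hf₂ : IsFundClass Z₂ t₂ f₂)
    (x₁ : ℤ → M₁) (x₂ : ℤ → M₂)
    (hx₁ : TowerD Z₁.grading Z₁.d Z₁.j Z₁.s f₁ t₁ D₁ x₁)
    (hx₂ : TowerD Z₂.grading Z₂.d Z₂.j Z₂.s f₂ t₂ D₂ x₂) :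
    ∃ χ : ℤ → M₁ ⊗[ZMod 2] M₂,
      TowerD (tensorGrading Z₁.grading Z₂.grading) (tensorD Z₁.d Z₂.d)
        (tensorJ Z₁.j Z₂.j) (tensorS Z₁.j Z₁.s Z₂.s)
        (f₁ ⊗ₜ[ZMod 2] f₂) (t₁ + t₂) (D₁ + D₂) χ := by
  obtain ⟨-, hf₁g, hf₁d, hf₁j, hf₁s⟩ := hf₁
  obtain ⟨-, hf₂g, hf₂d, hf₂j, hf₂s⟩ := hf₂
  obtain ⟨hx₁g, hx₁b, hx₁r⟩ := hx₁
  obtain ⟨hx₂g, hx₂b, hx₂r⟩ := hx₂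
  set τ : ℤ := t₁ + 2*(D₁:ℤ) - 1 with hτ
  set z : M₁ := if D₁ = 0 then f₁ else Z₁.s (x₁ τ + Z₁.j (Z₁.j (x₁ τ))) with hz
  have hjz : Z₁.j (Z₁.j z) = z := by
    by_cases h : D₁ = 0
    · rw [hz, if_pos h, hf₁j, hf₁j]
    · rw [hz, if_neg h, ← Z₁.s_jj]
      congr 1
      rw [map_add, map_add, Z₁.j_four]
      abel
  have hsz : Z₁.s z = 0 := by
    by_cases h : D₁ = 0
    · rw [hz, if_pos h]; exact hf₁s
    · rw [hz, if_neg h]; exact Z₁.s_sq _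
  have hsdx : D₁ ≠ 0 → Z₁.s (Z₁.d (x₁ τ)) = 0 := by
    intro h
    by_cases h1 : D₁ = 1
    · have hτ1 : τ = t₁ + 1 := by omega
      rw [hτ1, hx₁b (by omega), hf₁s]
    · have hr := hx₁r τ (by omega) (by omega) (by omega)
      rw [hr, map_add, Z₁.s_jj, Z₁.s_jj, Z₁.s_sq]
      simp
  have hdz : Z₁.d z = 0 := by
    by_cases h : D₁ = 0
    · rw [hz, if_pos h]; exact hf₁d
    · have hw : Z₁.j (Z₁.j (x₁ τ + Z₁.j (Z₁.j (x₁ τ)))) = x₁ τ + Z₁.j (Z₁.j (x₁ τ)) := by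
        rw [map_add, map_add, Z₁.j_four]
        abel
      have hdw : Z₁.s (Z₁.d (x₁ τ + Z₁.j (Z₁.j (x₁ τ)))) = 0 := by
        rw [map_add, Z₁.d_j, Z₁.d_j, map_add, Z₁.s_jj, hsdx h, map_zero, map_zero,
          add_zero]
      rw [hz, if_neg h, Z₁.d_s, hdw, hw, zero_add, zmod2_add_self]
  have hzg : z ∈ Z₁.grading (t₁ + 2*(D₁:ℤ)) := by
    by_cases h : D₁ = 0
    · have : t₁ + 2*(D₁:ℤ) = t₁ := by omega
      rw [this, hz, if_pos h]; exact hf₁g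
    · have hx : x₁ τ ∈ Z₁.grading τ := hx₁g τ (by omega) (by omega) (by omega)
      have hmem := Z₁.s_mem τ _ (add_mem hx (Z₁.j_mem τ _ (Z₁.j_mem τ _ hx)))
      have hτ1 : τ + 1 = t₁ + 2*(D₁:ℤ) := by omega
      rw [hz, if_neg h, ← hτ1]
      exact hmem
  refine ⟨fun i => if i < t₁ + t₂ + 2*(D₁:ℤ) then x₁ (i - t₂) ⊗ₜ[ZMod 2] f₂
    else z ⊗ₜ[ZMod 2] x₂ (i - t₁ - 2*(D₁:ℤ)), ?_, ?_, ?_⟩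
  · intro i h1 h2 h3
    by_cases hcase : i < t₁ + t₂ + 2*(D₁:ℤ)
    · simp only [if_pos hcase]
      exact tmul_mem_tensorGrading _ _
        (hx₁g (i - t₂) (by omega) (by omega) (by omega)) hf₂g (by omega)
    · simp only [if_neg hcase]
      exact tmul_mem_tensorGrading _ _ hzg
        (hx₂g (i - t₁ - 2*(D₁:ℤ)) (by omega) (by omega) (by omega)) (by omega)
  · intro hD
    by_cases hD₁ : D₁ = 0
    · have hne : ¬ (t₁ + t₂ + 1 < t₁ + t₂ + 2*(D₁:ℤ)) := by omega
      simp only [if_neg hne]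
      have hidx : t₁ + t₂ + 1 - t₁ - 2*(D₁:ℤ) = t₂ + 1 := by omega
      rw [hidx, tensorD_tmul, hdz, hx₂b (by omega), TensorProduct.zero_tmul, zero_add,
        hz, if_pos hD₁]
    · have hlt : t₁ + t₂ + 1 < t₁ + t₂ + 2*(D₁:ℤ) := by omega
      simp only [if_pos hlt]
      have hidx : t₁ + t₂ + 1 - t₂ = t₁ + 1 := by omega
      rw [hidx, tensorD_tmul, hx₁b (by omega), hf₂d, TensorProduct.tmul_zero, add_zero]
  · intro i h1 h2 h3
    by_cases hc2 : i - 2 < t₁ + t₂ + 2*(D₁:ℤ)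
    · by_cases hc1 : i < t₁ + t₂ + 2*(D₁:ℤ)
      · -- both indices on side 1
        simp only [if_pos hc1, if_pos hc2]
        rw [tensorD_tmul, hf₂d, TensorProduct.tmul_zero, add_zero,
          hx₁r (i - t₂) (by omega) (by omega) (by omega),
          rhs_tmul_fix _ _ _ _ _ hf₂j hf₂s]
        have hidx : i - 2 - t₂ = i - t₂ - 2 := by omega
        rw [hidx]
      · -- crossing step
        have hD₁ : D₁ ≠ 0 := by omega
        simp only [if_neg hc1, if_pos hc2]
        have hidx : i - t₁ - 2*(D₁:ℤ) = t₂ + 1 := by omega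
        have hidx2 : i - 2 - t₂ = τ := by omega
        rw [hidx, hidx2, tensorD_tmul, hdz, hx₂b (by omega), TensorProduct.zero_tmul,
          zero_add, rhs_tmul_fix _ _ _ _ _ hf₂j hf₂s, hz, if_neg hD₁, map_add]
    · -- both indices on side 2
      have hc1 : ¬ i < t₁ + t₂ + 2*(D₁:ℤ) := by omega
      simp only [if_neg hc1, if_neg hc2]
      rw [tensorD_tmul, hdz, TensorProduct.zero_tmul, zero_add,
        hx₂r (i - t₁ - 2*(D₁:ℤ)) (by omega) (by omega) (by omega),
        rhs_z_tmul _ _ _ _ _ hsz hjz]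
      have hidx : i - 2 - t₁ - 2*(D₁:ℤ) = i - t₁ - 2*(D₁:ℤ) - 2 := by omega
      rw [hidx]
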